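/- Let H be a real Hilbert space, Q ⊆ H a nonempty closed convex set, ν > 0, A : Q → H a ν-inverse strongly monotone operator, S : Q → Q a nonexpansive mapping, and f : Q → Q a contraction with coefficient ρ ∈ [0,1). Assume Ω = Fix(S) ∩ S_VI(A,Q) is nonempty. Let {α_n} ⊆ (0,1] and {λ_n} ⊆ [a,b] with 0 < a < b < 2ν be sequences such that α_n → 0, ∑ α_n = +∞, ∑ |α_{n+1} − α_n| < ∞ and ∑ |λ_{n+1} − λ_n| < ∞. Let x_1 ∈ Q and x_{n+1} = α_n·f(x_n) + (1 − α_n)·S(P_Q(x_n − λ_n·A x_n)). Then for every q ∈ Ω, ‖A x_n − A q‖ → 0 as n → ∞. -/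
import Mathlib

open scoped RealInnerProductSpace
open Filter Finset

private lemma le_of_sq_le_sq' {t s : ℝ} (ht : 0 ≤ t) (hs : 0 ≤ s) (h : t ^ 2 ≤ s ^ 2) :
    t ≤ s := by nlinarith

private lemma xu_lemma {s γ δ : ℕ → ℝ} (hs : ∀ n, 0 ≤ s n)
    (hγ0 : ∀ n, 0 ≤ γ n) (hγ1 : ∀ n, γ n ≤ 1)
    (hδ0 : ∀ n, 0 ≤ δ n)
    (hrec : ∀ n, s (n + 1) ≤ (1 - γ n) * s n + δ n)
    (hδ : Summable δ)
    (hγdiv : Tendsto (fun N => ∑ n ∈ range N, γ n) atTop atTop) :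
    Tendsto s atTop (nhds 0) := by
  rw [Metric.tendsto_atTop]
  intro ε hε
  have htail : Tendsto (fun m => ∑' i, δ (i + m)) atTop (nhds 0) := by
    exact _root_.tendsto_sum_nat_add δ
  obtain ⟨m, hm⟩ := (Metric.tendsto_atTop.mp htail (ε / 2) (by linarith)).imp (fun m h => h m le_rfl)
  have htail_lt : ∑' i, δ (i + m) < ε / 2 := by
    have := hm
    rw [Real.dist_eq, sub_zero, abs_of_nonneg (tsum_nonneg fun i => hδ0 _)] at this; exact this
  have key : ∀ n, m ≤ n → s n ≤ (∏ k ∈ Ico m n, (1 - γ k)) * s m + ∑ k ∈ Ico m n, δ k := by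
    intro n hn
    induction n with
    | zero => simp [Nat.le_zero.mp hn]
    | succ n ih =>
      rcases Nat.lt_or_ge m (n + 1) with h | h
      · have hmn : m ≤ n := Nat.lt_succ_iff.mp h
        have ihn := ih hmn
        have hprod0 : 0 ≤ ∏ k ∈ Ico m n, (1 - γ k) :=
          Finset.prod_nonneg fun k _ => by linarith [hγ1 k]
        calc s (n + 1) ≤ (1 - γ n) * s n + δ n := hrec n
          _ ≤ (1 - γ n) * ((∏ k ∈ Ico m n, (1 - γ k)) * s m + ∑ k ∈ Ico m n, δ k) + δ n := by
              have h1 : 0 ≤ 1 - γ n := by linarith [hγ1 n]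
              nlinarith [ihn]
          _ ≤ (∏ k ∈ Ico m (n + 1), (1 - γ k)) * s m + ∑ k ∈ Ico m (n + 1), δ k := by
              rw [Finset.prod_Ico_succ_top hmn, Finset.sum_Ico_succ_top hmn]
              have h1 : 0 ≤ 1 - γ n := by linarith [hγ1 n]
              have hsum0 : 0 ≤ ∑ k ∈ Ico m n, δ k := Finset.sum_nonneg fun k _ => hδ0 k
              nlinarith [hγ0 n]
      · have : m = n + 1 := le_antisymm hn h
        simp [this]
  have hprodexp : ∀ n, (∏ k ∈ Ico m n, (1 - γ k)) ≤ Real.exp (-(∑ k ∈ Ico m n, γ k)) := by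
    intro n
    calc (∏ k ∈ Ico m n, (1 - γ k)) ≤ ∏ k ∈ Ico m n, Real.exp (-(γ k)) :=
          Finset.prod_le_prod (fun k _ => by linarith [hγ1 k])
            (fun k _ => by linarith [Real.add_one_le_exp (-(γ k))])
      _ = Real.exp (-(∑ k ∈ Ico m n, γ k)) := by rw [← Real.exp_sum]; simp
  have hsumdiv : Tendsto (fun n => ∑ k ∈ Ico m n, γ k) atTop atTop := by
    have heq : (fun n => (∑ k ∈ range n, γ k) - ∑ k ∈ range m, γ k) =ᶠ[atTop]
        (fun n => ∑ k ∈ Ico m n, γ k) := by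
      filter_upwards [eventually_ge_atTop m] with n hn
      rw [Finset.sum_Ico_eq_sub _ hn]
    refine Tendsto.congr' heq ?_
    simpa [sub_eq_add_neg] using tendsto_atTop_add_const_right atTop (-∑ k ∈ range m, γ k) hγdiv
  have hexp0 : Tendsto (fun n => Real.exp (-(∑ k ∈ Ico m n, γ k))) atTop (nhds 0) :=
    Real.tendsto_exp_atBot.comp (tendsto_neg_atBot_iff.mpr hsumdiv)
  have hsm : Tendsto (fun n => Real.exp (-(∑ k ∈ Ico m n, γ k)) * s m) atTop (nhds 0) := by
    simpa using hexp0.mul_const (s m)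
  obtain ⟨N, hN⟩ := (Metric.tendsto_atTop.mp hsm (ε / 2) (by linarith))
  refine ⟨max m N, fun n hn => ?_⟩
  have hnm : m ≤ n := le_trans (le_max_left _ _) hn
  have hnN : N ≤ n := le_trans (le_max_right _ _) hn
  have h1 : s n ≤ (∏ k ∈ Ico m n, (1 - γ k)) * s m + ∑ k ∈ Ico m n, δ k := key n hnm
  have h2 : (∏ k ∈ Ico m n, (1 - γ k)) * s m ≤ Real.exp (-(∑ k ∈ Ico m n, γ k)) * s m :=
    mul_le_mul_of_nonneg_right (hprodexp n) (hs m)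
  have h3 : Real.exp (-(∑ k ∈ Ico m n, γ k)) * s m < ε / 2 := by
    have := hN n hnN
    rw [Real.dist_eq, sub_zero, abs_of_nonneg (mul_nonneg (Real.exp_pos _).le (hs m))] at this
    exact this
  have h4 : ∑ k ∈ Ico m n, δ k ≤ ∑' i, δ (i + m) := by
    have : ∑ k ∈ Ico m n, δ k = ∑ i ∈ range (n - m), δ (i + m) := by
      rw [Finset.sum_Ico_eq_sum_range]
      exact Finset.sum_congr rfl fun i _ => by ring_nf
    rw [this]
    exact Summable.sum_le_tsum _ (fun i _ => hδ0 _) ((summable_nat_add_iff m).mpr hδ)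
  rw [Real.dist_eq, sub_zero, abs_of_nonneg (hs n)]
  linarith

set_option maxHeartbeats 1000000 in
/-- Under the summability conditions, `‖A x_n - A q‖ → 0` for every `q ∈ Ω`. -/
theorem stmt_16 {H : Type*} [NormedAddCommGroup H] [InnerProductSpace ℝ H] [CompleteSpace H]
    (Q : Set H) (hQne : Q.Nonempty) (hQclosed : IsClosed Q) (hQconvex : Convex ℝ Q)
    (ν : ℝ) (hν : 0 < ν)
    (A : H → H) (hA : ∀ x ∈ Q, ∀ y ∈ Q, ν * ‖A x - A y‖ ^ 2 ≤ ⟪A x - A y, x - y⟫)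
    (P : H → H) (hPmem : ∀ x, P x ∈ Q)
    (hP : ∀ (x : H), ∀ y ∈ Q, ⟪x - P x, y - P x⟫ ≤ 0)
    (S : H → H) (hSmem : ∀ x ∈ Q, S x ∈ Q)
    (hS : ∀ x ∈ Q, ∀ y ∈ Q, ‖S x - S y‖ ≤ ‖x - y‖)
    (ρ : ℝ) (hρ : ρ ∈ Set.Ico (0 : ℝ) 1)
    (f : H → H) (hfmem : ∀ x ∈ Q, f x ∈ Q)
    (hf : ∀ x ∈ Q, ∀ y ∈ Q, ‖f x - f y‖ ≤ ρ * ‖x - y‖)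
    (Ω : Set H)
    (hΩ : Ω = {x : H | x ∈ Q ∧ S x = x} ∩ {q : H | q ∈ Q ∧ ∀ x ∈ Q, 0 ≤ ⟪A q, x - q⟫})
    (hΩne : Ω.Nonempty)
    (a b : ℝ) (hab : 0 < a ∧ a < b ∧ b < 2 * ν)
    (α lam : ℕ → ℝ)
    (hα : ∀ n, α n ∈ Set.Ioc (0 : ℝ) 1) (hlam : ∀ n, lam n ∈ Set.Icc a b)
    (hα0 : Filter.Tendsto α Filter.atTop (nhds 0))
    (hαdiv : Filter.Tendsto (fun N => ∑ n ∈ Finset.range N, α n) Filter.atTop Filter.atTop)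
    (hαvar : Summable (fun n => |α (n + 1) - α n|))
    (hlamvar : Summable (fun n => |lam (n + 1) - lam n|))
    (x : ℕ → H) (hx0 : x 0 ∈ Q)
    (hxrec : ∀ n, x (n + 1) = α n • f (x n) + (1 - α n) • S (P (x n - lam n • A (x n)))) :
    ∀ q ∈ Ω, Filter.Tendsto (fun n => ‖A (x n) - A q‖) Filter.atTop (nhds 0) := by
  obtain ⟨ha, hab', hb⟩ := hab
  obtain ⟨hρ0, hρ1⟩ := hρ
  intro q hq
  rw [hΩ] at hq
  obtain ⟨⟨hqQ, hSq⟩, -, hVI⟩ := hq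
  set y : ℕ → H := fun n => P (x n - lam n • A (x n)) with hy
  -- x n ∈ Q
  have hxQ : ∀ n, x n ∈ Q := by
    intro n
    induction n with
    | zero => exact hx0
    | succ n ih =>
      rw [hxrec n]
      exact hQconvex (hfmem _ ih) (hSmem _ (hPmem _)) (hα n).1.le
        (by linarith [(hα n).2]) (by ring)
  -- projection is nonexpansive
  have hPnonexp : ∀ u v : H, ‖P u - P v‖ ≤ ‖u - v‖ := by
    intro u v
    have h1 : ⟪u - P u, P v - P u⟫ ≤ 0 := hP u (P v) (hPmem v)
    have h2 : ⟪v - P v, P u - P v⟫ ≤ 0 := hP v (P u) (hPmem u)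
    have hkey : ‖P u - P v‖ ^ 2 ≤ ⟪u - v, P u - P v⟫ := by
      have hns : ⟪P u - P v, P u - P v⟫ = ‖P u - P v‖ ^ 2 :=
        real_inner_self_eq_norm_sq _
      simp only [inner_sub_left, inner_sub_right] at h1 h2 hns ⊢
      linarith [real_inner_comm u (P v), real_inner_comm u (P u), real_inner_comm v (P u),
        real_inner_comm v (P v), real_inner_comm (P u) (P v)]
    have h3 : ⟪u - v, P u - P v⟫ ≤ ‖u - v‖ * ‖P u - P v‖ := real_inner_le_norm _ _
    rcases eq_or_lt_of_le (norm_nonneg (P u - P v)) with h0 | h0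
    · rw [← h0]; exact norm_nonneg _
    · have : ‖P u - P v‖ * ‖P u - P v‖ ≤ ‖u - v‖ * ‖P u - P v‖ := by nlinarith
      exact le_of_mul_le_mul_right this h0
  -- firm contraction of I - λA
  have hIA : ∀ lm : ℝ, a ≤ lm → lm ≤ b → ∀ u ∈ Q, ∀ v ∈ Q,
      ‖(u - lm • A u) - (v - lm • A v)‖ ^ 2
        ≤ ‖u - v‖ ^ 2 - lm * (2 * ν - lm) * ‖A u - A v‖ ^ 2 := by
    intro lm hlm1 hlm2 u hu v hv
    have hexp : (u - lm • A u) - (v - lm • A v) = (u - v) - lm • (A u - A v) := by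
      rw [smul_sub]; abel
    rw [hexp]
    have hns := @norm_sub_sq_real H _ _ (u - v) (lm • (A u - A v))
    rw [real_inner_smul_right, norm_smul, Real.norm_eq_abs] at hns
    have hAineq := hA u hu v hv
    have hcomm := real_inner_comm (A u - A v) (u - v)
    have hsq : |lm| ^ 2 = lm ^ 2 := sq_abs lm
    nlinarith [mul_le_mul_of_nonneg_left hAineq (show (0:ℝ) ≤ 2 * lm by linarith),
      norm_nonneg (A u - A v), sq_nonneg (‖A u - A v‖)]
  -- q is a fixed point of P ∘ (I - λA)
  have hPq : ∀ lm : ℝ, 0 < lm → P (q - lm • A q) = q := by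
    intro lm hlm
    set z := q - lm • A q with hz
    have h1 : ⟪z - P z, q - P z⟫ ≤ 0 := hP z q hqQ
    have h2 : 0 ≤ ⟪A q, P z - q⟫ := hVI (P z) (hPmem z)
    have hzz : z - P z = (q - P z) - lm • A q := by rw [hz]; abel
    have hexpand : ⟪z - P z, q - P z⟫ = ‖q - P z‖ ^ 2 - lm * ⟪A q, q - P z⟫ := by
      rw [hzz, inner_sub_left, real_inner_smul_left, real_inner_self_eq_norm_sq]
    have h3 : ⟪A q, P z - q⟫ = -⟪A q, q - P z⟫ := by
      rw [← inner_neg_right]; congr 1; abel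
    have h4 : lm * ⟪A q, q - P z⟫ ≤ 0 := by
      have : ⟪A q, q - P z⟫ ≤ 0 := by rw [h3] at h2; linarith
      exact mul_nonpos_of_nonneg_of_nonpos hlm.le this
    have h5 : ‖q - P z‖ ^ 2 ≤ 0 := by linarith [hexpand ▸ h1]
    have h6 : q - P z = 0 := by
      rw [← norm_eq_zero]
      nlinarith [norm_nonneg (q - P z)]
    exact (sub_eq_zero.mp h6).symm
  -- the key decrease estimate
  have hstep : ∀ n, ‖y n - q‖ ^ 2
      ≤ ‖x n - q‖ ^ 2 - lam n * (2 * ν - lam n) * ‖A (x n) - A q‖ ^ 2 := by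
    intro n
    have h1 : ‖y n - q‖ ≤ ‖(x n - lam n • A (x n)) - (q - lam n • A q)‖ := by
      have hq' : q = P (q - lam n • A q) := (hPq (lam n) (lt_of_lt_of_le ha (hlam n).1)).symm
      calc ‖y n - q‖ = ‖P (x n - lam n • A (x n)) - P (q - lam n • A q)‖ := by
            rw [hy]; rw [← hq']
        _ ≤ ‖(x n - lam n • A (x n)) - (q - lam n • A q)‖ := hPnonexp _ _
    have h2 := hIA (lam n) (hlam n).1 (hlam n).2 (x n) (hxQ n) q hqQ
    nlinarith [norm_nonneg (y n - q), norm_nonneg ((x n - lam n • A (x n)) - (q - lam n • A q))]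
  have hlampos : ∀ n, 0 ≤ lam n * (2 * ν - lam n) := fun n =>
    mul_nonneg (le_trans ha.le (hlam n).1) (by linarith [(hlam n).2])
  have hyq : ∀ n, ‖y n - q‖ ≤ ‖x n - q‖ := by
    intro n
    refine le_of_sq_le_sq' (norm_nonneg _) (norm_nonneg _) ?_
    have := hstep n
    nlinarith [hlampos n, sq_nonneg (‖A (x n) - A q‖)]
  -- boundedness
  set M0 : ℝ := max ‖x 0 - q‖ (‖f q - q‖ / (1 - ρ)) with hM0def
  have hM0 : 0 ≤ M0 := le_trans (norm_nonneg _) (le_max_left _ _)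
  have hfqM : ‖f q - q‖ ≤ M0 * (1 - ρ) :=
    (div_le_iff₀ (by linarith : (0:ℝ) < 1 - ρ)).mp (le_max_right _ _)
  have hconv : ∀ n, ‖x (n+1) - q‖ ≤ α n * ‖f (x n) - q‖ + (1 - α n) * ‖S (y n) - q‖ := by
    intro n
    have hsplit : x (n+1) - q = α n • (f (x n) - q) + (1 - α n) • (S (y n) - q) := by
      rw [hxrec n, smul_sub, smul_sub, sub_smul, one_smul, sub_smul, one_smul]; abel
    calc ‖x (n+1) - q‖ ≤ ‖α n • (f (x n) - q)‖ + ‖(1 - α n) • (S (y n) - q)‖ := by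
          rw [hsplit]; exact norm_add_le _ _
      _ = α n * ‖f (x n) - q‖ + (1 - α n) * ‖S (y n) - q‖ := by
          rw [norm_smul, norm_smul, Real.norm_eq_abs, Real.norm_eq_abs,
            abs_of_pos (hα n).1, abs_of_nonneg (by linarith [(hα n).2] : (0:ℝ) ≤ 1 - α n)]
  have hfq' : ∀ n, ‖x n - q‖ ≤ M0 → ‖f (x n) - q‖ ≤ M0 := by
    intro n hn
    have h1 : ‖f (x n) - q‖ ≤ ‖f (x n) - f q‖ + ‖f q - q‖ := by
      calc ‖f (x n) - q‖ = ‖(f (x n) - f q) + (f q - q)‖ := by congr 1; abel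
        _ ≤ ‖f (x n) - f q‖ + ‖f q - q‖ := norm_add_le _ _
    have h2 : ‖f (x n) - f q‖ ≤ ρ * ‖x n - q‖ := hf _ (hxQ n) _ hqQ
    nlinarith [mul_le_mul_of_nonneg_left hn hρ0]
  have hSq' : ∀ n, ‖x n - q‖ ≤ M0 → ‖S (y n) - q‖ ≤ M0 := by
    intro n hn
    calc ‖S (y n) - q‖ = ‖S (y n) - S q‖ := by rw [hSq]
      _ ≤ ‖y n - q‖ := hS _ (hPmem _) _ hqQ
      _ ≤ ‖x n - q‖ := hyq n
      _ ≤ M0 := hn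
  have hbound : ∀ n, ‖x n - q‖ ≤ M0 := by
    intro n
    induction n with
    | zero => exact le_max_left _ _
    | succ n ih =>
      have h1 := hfq' n ih
      have h2 := hSq' n ih
      have h3 := hconv n
      nlinarith [mul_le_mul_of_nonneg_left h1 (hα n).1.le,
        mul_le_mul_of_nonneg_left h2 (by linarith [(hα n).2] : (0:ℝ) ≤ 1 - α n)]
  have hfb : ∀ n, ‖f (x n) - q‖ ≤ M0 := fun n => hfq' n (hbound n)
  have hSb : ∀ n, ‖S (y n) - q‖ ≤ M0 := fun n => hSq' n (hbound n)
  -- bound on ‖A x n‖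
  have hAdiff : ∀ n, ‖A (x n) - A q‖ ≤ M0 / ν := by
    intro n
    have h1 := hA (x n) (hxQ n) q hqQ
    have h2 := real_inner_le_norm (A (x n) - A q) (x n - q)
    have h3 := hbound n
    rw [le_div_iff₀ hν]
    have h4 : ν * ‖A (x n) - A q‖ ^ 2 ≤ ‖A (x n) - A q‖ * M0 :=
      le_trans h1 (h2.trans (mul_le_mul_of_nonneg_left h3 (norm_nonneg _)))
    rcases eq_or_lt_of_le (norm_nonneg (A (x n) - A q)) with h0 | h0
    · rw [← h0]; simpa using hM0
    · have h5 : (‖A (x n) - A q‖ * ν) * ‖A (x n) - A q‖ ≤ M0 * ‖A (x n) - A q‖ := by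
        nlinarith [h4]
      exact le_of_mul_le_mul_right h5 h0
  have hAx : ∀ n, ‖A (x n)‖ ≤ M0 / ν + ‖A q‖ := by
    intro n
    calc ‖A (x n)‖ = ‖(A (x n) - A q) + A q‖ := by congr 1; abel
      _ ≤ ‖A (x n) - A q‖ + ‖A q‖ := norm_add_le _ _
      _ ≤ M0 / ν + ‖A q‖ := by linarith [hAdiff n]
  -- difference recursion
  set d : ℕ → ℝ := fun n => ‖x (n+1) - x n‖ with hd
  set MA : ℝ := M0 / ν + ‖A q‖ with hMA
  have hMA0 : 0 ≤ MA := le_trans (norm_nonneg (A (x 0))) (hAx 0)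
  have hdrec : ∀ n, d (n+1) ≤ (1 - α (n+1) * (1 - ρ)) * d n
      + (|α (n+1) - α n| * (2 * M0) + |lam (n+1) - lam n| * MA) := by
    intro n
    have hxrec' : ∀ m, x (m+1) = α m • f (x m) + (1 - α m) • S (y m) := hxrec
    have hsplit : x (n+2) - x (n+1)
        = α (n+1) • (f (x (n+1)) - f (x n)) + (1 - α (n+1)) • (S (y (n+1)) - S (y n))
          + (α (n+1) - α n) • (f (x n) - S (y n)) := by
      rw [hxrec' (n+1), hxrec' n]
      module
    have hfd : ‖f (x (n+1)) - f (x n)‖ ≤ ρ * d n := hf _ (hxQ _) _ (hxQ _)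
    have hIAn : ‖(x (n+1) - lam (n+1) • A (x (n+1))) - (x n - lam (n+1) • A (x n))‖ ≤ d n := by
      refine le_of_sq_le_sq' (norm_nonneg _) (norm_nonneg _) ?_
      have := hIA (lam (n+1)) (hlam (n+1)).1 (hlam (n+1)).2 (x (n+1)) (hxQ _) (x n) (hxQ _)
      nlinarith [hlampos (n+1), sq_nonneg (‖A (x (n+1)) - A (x n)‖),
        mul_nonneg (hlampos (n+1)) (sq_nonneg (‖A (x (n+1)) - A (x n)‖))]
    have hyd : ‖y (n+1) - y n‖ ≤ d n + |lam (n+1) - lam n| * MA := by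
      have h1 : ‖y (n+1) - y n‖
          ≤ ‖(x (n+1) - lam (n+1) • A (x (n+1))) - (x n - lam n • A (x n))‖ := hPnonexp _ _
      have h2 : (x (n+1) - lam (n+1) • A (x (n+1))) - (x n - lam n • A (x n))
          = ((x (n+1) - lam (n+1) • A (x (n+1))) - (x n - lam (n+1) • A (x n)))
            + (lam n - lam (n+1)) • A (x n) := by
        rw [sub_smul]; abel
      have h3 : ‖(lam n - lam (n+1)) • A (x n)‖ ≤ |lam (n+1) - lam n| * MA := by
        rw [norm_smul, Real.norm_eq_abs, abs_sub_comm]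
        exact mul_le_mul_of_nonneg_left (hAx n) (abs_nonneg _)
      calc ‖y (n+1) - y n‖
          ≤ ‖(x (n+1) - lam (n+1) • A (x (n+1))) - (x n - lam n • A (x n))‖ := h1
        _ ≤ ‖(x (n+1) - lam (n+1) • A (x (n+1))) - (x n - lam (n+1) • A (x n))‖
            + ‖(lam n - lam (n+1)) • A (x n)‖ := by rw [h2]; exact norm_add_le _ _
        _ ≤ d n + |lam (n+1) - lam n| * MA := add_le_add hIAn h3
    have hSd : ‖S (y (n+1)) - S (y n)‖ ≤ ‖y (n+1) - y n‖ := hS _ (hPmem _) _ (hPmem _)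
    have hfS : ‖f (x n) - S (y n)‖ ≤ 2 * M0 := by
      calc ‖f (x n) - S (y n)‖ = ‖(f (x n) - q) - (S (y n) - q)‖ := by congr 1; abel
        _ ≤ ‖f (x n) - q‖ + ‖S (y n) - q‖ := norm_sub_le _ _
        _ ≤ 2 * M0 := by linarith [hfb n, hSb n]
    have htri : d (n+1) ≤ α (n+1) * ‖f (x (n+1)) - f (x n)‖
        + (1 - α (n+1)) * ‖S (y (n+1)) - S (y n)‖
        + |α (n+1) - α n| * ‖f (x n) - S (y n)‖ := by
      have : d (n+1) = ‖x (n+2) - x (n+1)‖ := rfl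
      rw [this, hsplit]
      refine le_trans (norm_add_le _ _) ?_
      refine add_le_add (le_trans (norm_add_le _ _) ?_) ?_
      · rw [norm_smul, norm_smul, Real.norm_eq_abs, Real.norm_eq_abs,
          abs_of_pos (hα (n+1)).1, abs_of_nonneg (by linarith [(hα (n+1)).2] : (0:ℝ) ≤ 1 - α (n+1))]
      · rw [norm_smul, Real.norm_eq_abs]
    have hα1 : 0 < α (n+1) := (hα (n+1)).1
    have hα2 : α (n+1) ≤ 1 := (hα (n+1)).2
    have e1 : α (n+1) * ‖f (x (n+1)) - f (x n)‖ ≤ α (n+1) * (ρ * d n) :=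
      mul_le_mul_of_nonneg_left hfd hα1.le
    have e2 : (1 - α (n+1)) * ‖S (y (n+1)) - S (y n)‖
        ≤ (1 - α (n+1)) * (d n + |lam (n+1) - lam n| * MA) :=
      mul_le_mul_of_nonneg_left (le_trans hSd hyd) (by linarith)
    have e3 : |α (n+1) - α n| * ‖f (x n) - S (y n)‖ ≤ |α (n+1) - α n| * (2 * M0) :=
      mul_le_mul_of_nonneg_left hfS (abs_nonneg _)
    have hlm0 : 0 ≤ |lam (n+1) - lam n| * MA := mul_nonneg (abs_nonneg _) hMA0
    nlinarith [htri, mul_nonneg hα1.le hlm0]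
  -- d n → 0 via xu_lemma
  have hd0 : Tendsto d atTop (nhds 0) := by
    refine xu_lemma (fun n => norm_nonneg _) (fun n => mul_nonneg (hα (n+1)).1.le (by linarith))
      (fun n => mul_le_one₀ (hα (n+1)).2 (by linarith) (by linarith))
      (fun n => add_nonneg (mul_nonneg (abs_nonneg _) (by linarith))
        (mul_nonneg (abs_nonneg _) hMA0))
      hdrec ?_ ?_
    · exact ((hαvar.mul_right (2 * M0)).add (hlamvar.mul_right MA))
    · have h1 : Tendsto (fun N => ∑ n ∈ range N, α (n+1)) atTop atTop := by
        have heq : ∀ N, ∑ n ∈ range N, α (n+1) = (∑ n ∈ range (N+1), α n) - α 0 := by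
          intro N
          rw [Finset.sum_range_succ' α N]
          ring
        simp only [heq]
        simpa [sub_eq_add_neg] using
          tendsto_atTop_add_const_right atTop (-α 0) (hαdiv.comp (tendsto_add_atTop_nat 1))
      have h2 : Tendsto (fun N => (∑ n ∈ range N, α (n+1)) * (1 - ρ)) atTop atTop :=
        h1.atTop_mul_const (by linarith)
      refine h2.congr fun N => ?_
      rw [Finset.sum_mul]
  -- final estimate
  set c : ℝ := a * (2 * ν - b) with hc
  have hcpos : 0 < c := mul_pos ha (by linarith)
  have hkey : ∀ n, c * ‖A (x n) - A q‖ ^ 2 ≤ 2 * M0 * d n + M0 ^ 2 * α n := by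
    intro n
    have hα1 : 0 < α n := (hα n).1
    have hα2 : α n ≤ 1 := (hα n).2
    have h1 := hconv n
    have h2 : ‖x (n+1) - q‖ ^ 2 ≤ α n * ‖f (x n) - q‖ ^ 2 + (1 - α n) * ‖S (y n) - q‖ ^ 2 := by
      have hs0 : 0 ≤ ‖f (x n) - q‖ := norm_nonneg _
      have ht0 : 0 ≤ ‖S (y n) - q‖ := norm_nonneg _
      have hsq : ‖x (n+1) - q‖ ^ 2
          ≤ (α n * ‖f (x n) - q‖ + (1 - α n) * ‖S (y n) - q‖) ^ 2 := by
        have hr0 : 0 ≤ α n * ‖f (x n) - q‖ + (1 - α n) * ‖S (y n) - q‖ := by nlinarith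
        nlinarith [norm_nonneg (x (n+1) - q)]
      nlinarith [mul_nonneg (mul_nonneg hα1.le (show (0:ℝ) ≤ 1 - α n by linarith))
        (sq_nonneg (‖f (x n) - q‖ - ‖S (y n) - q‖))]
    have h3 : ‖S (y n) - q‖ ^ 2 ≤ ‖y n - q‖ ^ 2 := by
      have h := hSq' n (hbound n)
      have h' : ‖S (y n) - q‖ ≤ ‖y n - q‖ := by
        calc ‖S (y n) - q‖ = ‖S (y n) - S q‖ := by rw [hSq]
          _ ≤ ‖y n - q‖ := hS _ (hPmem _) _ hqQ
      nlinarith [norm_nonneg (S (y n) - q), norm_nonneg (y n - q)]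
    have h4 := hstep n
    have h5 : c * ‖A (x n) - A q‖ ^ 2 ≤ lam n * (2 * ν - lam n) * ‖A (x n) - A q‖ ^ 2 := by
      have hl1 : a ≤ lam n := (hlam n).1
      have hl2 : lam n ≤ b := (hlam n).2
      have : c ≤ lam n * (2 * ν - lam n) := by nlinarith
      exact mul_le_mul_of_nonneg_right this (sq_nonneg _)
    have h6 : ‖x n - q‖ ^ 2 - ‖x (n+1) - q‖ ^ 2 ≤ 2 * M0 * d n := by
      have hu := hbound n
      have hv := hbound (n+1)
      have hd1 : ‖x n - q‖ - ‖x (n+1) - q‖ ≤ d n := by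
        have := norm_sub_norm_le (x n - q) (x (n+1) - q)
        have he : (x n - q) - (x (n+1) - q) = -(x (n+1) - x n) := by abel
        rw [he, norm_neg] at this
        exact this
      have hdn0 : 0 ≤ d n := norm_nonneg _
      rcases le_or_gt ‖x n - q‖ ‖x (n+1) - q‖ with h | h
      · nlinarith [norm_nonneg (x n - q), norm_nonneg (x (n+1) - q)]
      · nlinarith [norm_nonneg (x n - q), norm_nonneg (x (n+1) - q)]
    -- combine: ‖x(n+1)-q‖² ≤ α M0² + ‖xn-q‖² - c g²
    have hfb2 : ‖f (x n) - q‖ ^ 2 ≤ M0 ^ 2 := by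
      have := hfb n
      nlinarith [norm_nonneg (f (x n) - q)]
    have hbr0 : 0 ≤ ‖x n - q‖ ^ 2 - lam n * (2 * ν - lam n) * ‖A (x n) - A q‖ ^ 2 := by
      nlinarith [sq_nonneg (‖y n - q‖)]
    nlinarith [mul_le_mul_of_nonneg_left hfb2 hα1.le,
      mul_nonneg hα1.le hbr0]
  -- squeeze
  have hRHS : Tendsto (fun n => (2 * M0 * d n + M0 ^ 2 * α n) / c) atTop (nhds 0) := by
    have h1 : Tendsto (fun n => 2 * M0 * d n + M0 ^ 2 * α n) atTop (nhds 0) := by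
      have := (hd0.const_mul (2 * M0)).add (hα0.const_mul (M0 ^ 2))
      simpa using this
    simpa using h1.div_const c
  have hg2 : Tendsto (fun n => ‖A (x n) - A q‖ ^ 2) atTop (nhds 0) := by
    refine tendsto_of_tendsto_of_tendsto_of_le_of_le tendsto_const_nhds hRHS
      (fun n => sq_nonneg _) (fun n => ?_)
    rw [le_div_iff₀ hcpos]
    linarith [hkey n]
  have hfinal : Tendsto (fun n => Real.sqrt (‖A (x n) - A q‖ ^ 2)) atTop (nhds 0) :=
    (Real.continuous_sqrt.tendsto' 0 0 Real.sqrt_zero).comp hg2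
  refine hfinal.congr fun n => ?_
  exact Real.sqrt_sq (norm_nonneg _)
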